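/- Let G be a thick spider with spider partition (S, C, R) and R nonempty. Then i_R(G) = 3. -/
import Mathlib


/-- `f` is an Independent Roman Dominating Function of `G`: values in {0,1,2},
every 0-labeled vertex has a 2-labeled neighbor, and no two adjacent vertices
are both positively labeled. -/
def IsIRDF {V : Type*} (G : SimpleGraph V) (f : V → ℕ) : Prop :=
  (∀ v, f v ≤ 2) ∧
  (∀ v, f v = 0 → ∃ u, G.Adj v u ∧ f u = 2) ∧
  (∀ u v, G.Adj u v → f u = 0 ∨ f v = 0)

/-- The weight of a labeling. -/
def irdfWeight {V : Type*} [Fintype V] (f : V → ℕ) : ℕ := ∑ v, f v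

/-- The independent Roman domination number. -/
noncomputable def iR {V : Type*} [Fintype V] (G : SimpleGraph V) : ℕ :=
  sInf {w | ∃ f : V → ℕ, IsIRDF G f ∧ irdfWeight f = w}

/-- `s` is an independent dominating set of `G`. -/
def IsIndepDom {V : Type*} (G : SimpleGraph V) (s : Finset V) : Prop :=
  (∀ u ∈ s, ∀ v ∈ s, ¬ G.Adj u v) ∧ (∀ v, v ∉ s → ∃ u ∈ s, G.Adj u v)

/-- The independent domination number. -/
noncomputable def indepDomNum {V : Type*} [Fintype V] (G : SimpleGraph V) : ℕ :=
  sInf {n | ∃ s : Finset V, IsIndepDom G s ∧ s.card = n}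

section Spider

variable {V : Type*} [Fintype V] [DecidableEq V] (G : SimpleGraph V)
  {l : ℕ} (c s : Fin l → V) (R : Finset V)

/-- The spider partition data: `c` enumerates the clique `C`, `s` the independent
set `S`, `R` is the head (the remaining vertices), every vertex of `R` is adjacent
to every vertex of `C` and to no vertex of `S`. -/
def IsSpiderPartition : Prop :=
  2 ≤ l ∧ Function.Injective c ∧ Function.Injective s ∧
  (∀ i j, c i ≠ s j) ∧
  (∀ v, v ∈ R ↔ ∀ i, v ≠ c i ∧ v ≠ s i) ∧
  (∀ i j, i ≠ j → G.Adj (c i) (c j)) ∧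
  (∀ i j, ¬ G.Adj (s i) (s j)) ∧
  (∀ v ∈ R, ∀ i, G.Adj v (c i)) ∧
  (∀ v ∈ R, ∀ i, ¬ G.Adj v (s i))

/-- A thin spider: `N(s i) = {c i}`. -/
def IsThinSpider : Prop :=
  IsSpiderPartition G c s R ∧ ∀ i v, G.Adj (s i) v ↔ v = c i

/-- A thick spider: `N(s i) = C \ {c i}`. -/
def IsThickSpider : Prop :=
  IsSpiderPartition G c s R ∧ ∀ i v, G.Adj (s i) v ↔ ∃ j, j ≠ i ∧ v = c j

end Spider

/-- a thick spider with nonempty head has `i_R(G) = 3`. -/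
theorem iR_thick_spider {V : Type*} [Fintype V] [DecidableEq V]
    (G : SimpleGraph V) {l : ℕ} (c s : Fin l → V) (R : Finset V)
    (hspider : IsThickSpider G c s R) (hR : R.Nonempty) :
    iR G = 3 := by
  obtain ⟨⟨hl, hcinj, hsinj, hcs, hRmem, hcc, hss, hRc, hRs⟩, hthick⟩ := hspider
  have i0 : Fin l := ⟨0, by omega⟩
  set j0 : Fin l := ⟨0, by omega⟩ with hj0
  set j1 : Fin l := ⟨1, by omega⟩ with hj1
  have hj01 : j0 ≠ j1 := by simp [hj0, hj1, Fin.ext_iff]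
  have hsc : ∀ i, ¬ G.Adj (s i) (c i) := by
    intro i h
    rw [hthick] at h
    obtain ⟨j, hj, hcj⟩ := h
    exact hj (hcinj hcj).symm
  -- the candidate function
  set f : V → ℕ := fun v => if v = c j0 then 2 else if v = s j0 then 1 else 0 with hf
  have hfIRDF : IsIRDF G f := by
    refine ⟨?_, ?_, ?_⟩
    · intro v
      simp only [hf]
      split_ifs <;> omega
    · intro v hv
      refine ⟨c j0, ?_, by simp [hf]⟩
      have hvc : v ≠ c j0 := by
        intro h; rw [hf] at hv; simp [h] at hv
      have hvs : v ≠ s j0 := by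
        intro h; rw [hf] at hv; simp [h, hvc, Ne.symm (hcs j0 j0)] at hv
      by_cases hvR : v ∈ R
      · exact hRc v hvR j0
      · have := (hRmem v).not.mp hvR
        push_neg at this
        obtain ⟨i, hi⟩ := this
        by_cases hci : v = c i
        · have hij : i ≠ j0 := fun h => hvc (h ▸ hci)
          exact hci ▸ hcc i j0 hij
        · have hsi : v = s i := hi hci
          have hij : i ≠ j0 := fun h => hvs (h ▸ hsi)
          exact hsi ▸ (hthick i (c j0)).mpr ⟨j0, fun h => hij h.symm, rfl⟩
    · intro u v h
      by_contra hcon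
      push_neg at hcon
      obtain ⟨hu, hv⟩ := hcon
      have key : ∀ w, f w ≠ 0 → w = c j0 ∨ w = s j0 := by
        intro w hw
        rw [hf] at hw
        by_cases h1 : w = c j0
        · exact Or.inl h1
        by_cases h2 : w = s j0
        · exact Or.inr h2
        simp [h1, h2] at hw
      rcases key u hu with h1 | h1 <;> rcases key v hv with h2 | h2
      · exact G.irrefl (h1 ▸ h2 ▸ h)
      · exact hsc j0 (h1 ▸ h2 ▸ h).symm
      · exact hsc j0 (h1 ▸ h2 ▸ h)
      · exact G.irrefl (h1 ▸ h2 ▸ h)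
  have hwt : irdfWeight f = 3 := by
    have hfe : f = fun v => (if v = c j0 then 2 else 0) + (if v = s j0 then 1 else 0) := by
      funext v
      rw [hf]
      by_cases h1 : v = c j0
      · have h2 : v ≠ s j0 := fun h => hcs j0 j0 (h1 ▸ h)
        simp [h1, h2, hcs j0 j0, Ne.symm (hcs j0 j0)]
      · by_cases h2 : v = s j0 <;> simp [h1, h2, hcs j0 j0, Ne.symm (hcs j0 j0)]
    rw [irdfWeight, hfe, Finset.sum_add_distrib]
    simp
  -- the set
  have hmem : (3 : ℕ) ∈ {w | ∃ g : V → ℕ, IsIRDF G g ∧ irdfWeight g = w} :=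
    ⟨f, hfIRDF, hwt⟩
  have hlb : ∀ w ∈ {w | ∃ g : V → ℕ, IsIRDF G g ∧ irdfWeight g = w}, 3 ≤ w := by
    rintro w ⟨g, ⟨hg2, hg0, hind⟩, rfl⟩
    by_contra hw
    push_neg at hw
    have hw2 : ∑ v, g v ≤ 2 := by
      rw [irdfWeight] at hw; omega
    by_cases hex : ∃ v, g v = 2
    · obtain ⟨v, hv⟩ := hex
      have hzero : ∀ u, u ≠ v → g u = 0 := by
        intro u hu
        have hpair : g v + g u ≤ ∑ x, g x := by
          have hsub := Finset.sum_le_sum_of_subset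
            (Finset.subset_univ ({v, u} : Finset V)) (f := g)
          rwa [Finset.sum_pair (Ne.symm hu)] at hsub
        omega
      have hunique : ∀ u, g u = 2 → u = v := by
        intro u hu
        by_contra h
        rw [hzero u h] at hu
        omega
      by_cases hvR : v ∈ R
      · have hne : s j0 ≠ v := fun h => ((hRmem v).mp hvR j0).2 h.symm
        obtain ⟨u, hadj, hu2⟩ := hg0 _ (hzero _ hne)
        rw [hunique u hu2] at hadj
        exact hRs v hvR j0 hadj.symm
      · have := (hRmem v).not.mp hvR
        push_neg at this
        obtain ⟨i, hi⟩ := this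
        by_cases hci : v = c i
        · have hne : s i ≠ v := fun h => hcs i i (h.trans hci).symm
          obtain ⟨u, hadj, hu2⟩ := hg0 _ (hzero _ hne)
          rw [hunique u hu2] at hadj
          exact hsc i (hci ▸ hadj)
        · have hsi : v = s i := hi hci
          have hne : c i ≠ v := fun h => hcs i i (h.trans hsi)
          obtain ⟨u, hadj, hu2⟩ := hg0 _ (hzero _ hne)
          rw [hunique u hu2] at hadj
          exact hsc i (hsi ▸ hadj).symm
    · push_neg at hex
      have hpos : ∀ v, g v ≠ 0 := by
        intro v h
        obtain ⟨u, -, hu⟩ := hg0 v h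
        exact hex u hu
      rcases hind (c j0) (c j1) (hcc _ _ hj01) with h | h
      · exact hpos _ h
      · exact hpos _ h
  rw [iR]
  exact le_antisymm (Nat.sInf_le hmem) (le_csInf ⟨3, hmem⟩ hlb)
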